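/- Let d, M be positive integers, M₁, M₂ > 0, C_g > 0, and x̃₁, …, x̃_M ∈ ℝ^d with ‖x̃_i‖₂ ≤ M₂. Let d_i ≥ 0 for i = 1, …, M. Define m₁ = e^{M₁M₂}/(1+e^{M₁M₂})², m₀ = M₁M₂·m₁ + 1/(1+e^{M₁M₂}), c̃ = m₁ Σ_{i=1}^M d_i x̃_i ∈ ℝ^d, and c̃₀ = m₀ Σ_{i=1}^M d_i. Assume C_g > c̃₀ and set c = c̃/(C_g − c̃₀). Then for every λ ∈ ℝ^d with ‖λ‖₂ ≤ M₁: if Σ_{i=1}^M d_i/(1+e^{−λ·x̃_i}) ≤ C_g, then c·λ ≤ 1. (This is the inclusion F₁ ⊆ F₂ of the paper.) -/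

import Mathlib

open scoped RealInnerProductSpace

lemma sigmoid_tangent_bound (s : ℝ) (hs : 0 ≤ s) (z : ℝ) (hz : |z| ≤ s) :
    (Real.exp s / (1 + Real.exp s) ^ 2) * z +
      (s * (Real.exp s / (1 + Real.exp s) ^ 2) + 1 / (1 + Real.exp s))
      ≤ 1 / (1 + Real.exp (-z)) := by
  set m₁ : ℝ := Real.exp s / (1 + Real.exp s) ^ 2 with hm
  set f : ℝ → ℝ := fun x => (1 + Real.exp (-x))⁻¹ - m₁ * x with hf
  have hpos : ∀ x : ℝ, 0 < 1 + Real.exp (-x) := fun x => by positivity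
  have hderiv : ∀ x : ℝ, HasDerivAt f (Real.exp (-x) / (1 + Real.exp (-x)) ^ 2 - m₁) x := by
    intro x
    have h1 : HasDerivAt (fun x : ℝ => 1 + Real.exp (-x)) (-Real.exp (-x)) x := by
      have := ((Real.hasDerivAt_exp (-x)).comp x (hasDerivAt_neg x)).const_add 1
      simpa using this
    have h2 := h1.inv (ne_of_gt (hpos x))
    have h3 : HasDerivAt (fun x : ℝ => m₁ * x) m₁ x := by
      simpa using (hasDerivAt_id x).const_mul m₁
    have := h2.sub h3
    rw [show Real.exp (-x) / (1 + Real.exp (-x)) ^ 2 - m₁ = - -Real.exp (-x) / (1 + Real.exp (-x)) ^ 2 - m₁ by ring]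
    exact this
  have hmono : MonotoneOn f (Set.Icc (-s) s) := by
    apply monotoneOn_of_deriv_nonneg (convex_Icc _ _)
    · exact fun x _ => ((hderiv x).continuousAt).continuousWithinAt
    · exact fun x _ => (hderiv x).differentiableAt.differentiableWithinAt
    · intro x hx
      rw [(hderiv x).deriv]
      rw [interior_Icc] at hx
      obtain ⟨hx1, hx2⟩ := hx
      have hu : Real.exp (-x) ≤ Real.exp s := Real.exp_le_exp.2 (by linarith)
      have huv : (1 : ℝ) ≤ Real.exp (-x) * Real.exp s := by
        rw [← Real.exp_add]
        have : (0 : ℝ) ≤ -x + s := by linarith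
        calc (1 : ℝ) = Real.exp 0 := (Real.exp_zero).symm
          _ ≤ _ := Real.exp_le_exp.2 this
      have hup : 0 < Real.exp (-x) := Real.exp_pos _
      have hvp : 0 < Real.exp s := Real.exp_pos _
      have key : m₁ ≤ Real.exp (-x) / (1 + Real.exp (-x)) ^ 2 := by
        rw [hm, div_le_div_iff₀ (by positivity) (by positivity)]
        nlinarith [(Real.exp s - Real.exp (-x)) * (Real.exp (-x) * Real.exp s - 1)]
      linarith
  have habs := abs_le.1 hz
  have hfle : f (-s) ≤ f z := hmono ⟨le_refl _, by linarith⟩ ⟨habs.1, habs.2⟩ habs.1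
  have hfs : f (-s) = (1 + Real.exp s)⁻¹ + m₁ * s := by
    simp only [hf, neg_neg]; ring
  rw [hfs] at hfle
  simp only [hf] at hfle
  rw [one_div, one_div]
  linarith

/-- The inclusion `F₁ ⊆ F₂`: if `‖λ‖₂ ≤ M₁` and `Σ_i d_i/(1+e^{-λ·x̃_i}) ≤ C_g`, then
`c·λ ≤ 1` where `c = c̃/(C_g - c̃₀)`, `c̃ = m₁ Σ_i d_i x̃_i`, `c̃₀ = m₀ Σ_i d_i`,
`m₁ = e^{M₁M₂}/(1+e^{M₁M₂})²` and `m₀ = M₁M₂ m₁ + 1/(1+e^{M₁M₂})`. -/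
theorem stmt_6 (d M : ℕ) (hd : 0 < d) (hM : 0 < M) (M₁ M₂ C_g : ℝ)
    (hM₁ : 0 < M₁) (hM₂ : 0 < M₂) (hCg : 0 < C_g)
    (xt : Fin M → EuclideanSpace ℝ (Fin d)) (hxt : ∀ i, ‖xt i‖ ≤ M₂)
    (dn : Fin M → ℝ) (hdn : ∀ i, 0 ≤ dn i)
    (m₁ m₀ ct₀ : ℝ) (ct c : EuclideanSpace ℝ (Fin d))
    (hm₁ : m₁ = Real.exp (M₁ * M₂) / (1 + Real.exp (M₁ * M₂)) ^ 2)
    (hm₀ : m₀ = M₁ * M₂ * m₁ + 1 / (1 + Real.exp (M₁ * M₂)))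
    (hct : ct = m₁ • ∑ i, dn i • xt i)
    (hct₀ : ct₀ = m₀ * ∑ i, dn i)
    (hCg' : ct₀ < C_g)
    (hc : c = (C_g - ct₀)⁻¹ • ct) :
    ∀ l : EuclideanSpace ℝ (Fin d), ‖l‖ ≤ M₁ →
      (∑ i, dn i / (1 + Real.exp (-⟪l, xt i⟫))) ≤ C_g → ⟪c, l⟫ ≤ 1 := by
  intro l hl hsum
  have hs : (0:ℝ) ≤ M₁ * M₂ := by positivity
  -- each inner product is bounded
  have hzb : ∀ i, |⟪l, xt i⟫| ≤ M₁ * M₂ := by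
    intro i
    calc |⟪l, xt i⟫| ≤ ‖l‖ * ‖xt i‖ := abs_real_inner_le_norm _ _
      _ ≤ M₁ * M₂ := by
          apply mul_le_mul hl (hxt i) (norm_nonneg _) (le_of_lt hM₁)
  -- pointwise lower bound on sigmoid
  have hpt : ∀ i, dn i * (m₁ * ⟪l, xt i⟫ + m₀) ≤ dn i / (1 + Real.exp (-⟪l, xt i⟫)) := by
    intro i
    have h := sigmoid_tangent_bound (M₁ * M₂) hs ⟪l, xt i⟫ (hzb i)
    have h2 := mul_le_mul_of_nonneg_left h (hdn i)
    rw [mul_one_div] at h2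
    rw [hm₀, hm₁]
    exact h2
  -- sum it
  have hsum2 : ∑ i, dn i * (m₁ * ⟪l, xt i⟫ + m₀) ≤ C_g :=
    le_trans (Finset.sum_le_sum fun i _ => hpt i) hsum
  have hctl : ⟪ct, l⟫ = m₁ * ∑ i, dn i * ⟪l, xt i⟫ := by
    rw [hct, real_inner_smul_left, sum_inner]
    congr 1
    apply Finset.sum_congr rfl
    intro i _
    rw [real_inner_smul_left, real_inner_comm]
  have hexp : ∑ i, dn i * (m₁ * ⟪l, xt i⟫ + m₀)
      = m₁ * (∑ i, dn i * ⟪l, xt i⟫) + m₀ * ∑ i, dn i := by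
    rw [Finset.mul_sum, Finset.mul_sum, ← Finset.sum_add_distrib]
    apply Finset.sum_congr rfl
    intro i _
    ring
  have hctl_le : ⟪ct, l⟫ ≤ C_g - ct₀ := by
    rw [hctl, hct₀]
    rw [hexp] at hsum2
    linarith
  rw [hc, real_inner_smul_left]
  have hden : 0 < C_g - ct₀ := by linarith
  rw [inv_mul_le_iff₀ hden]  -- (C_g - ct₀)⁻¹ * ⟪ct,l⟫ ≤ 1 ↔ ⟪ct,l⟫ ≤ (C_g-ct₀)*1
  linarith
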